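/- arXiv:1403.3211 — 9 statements merged into one kernel-verified Lean document; each statement's English description precedes it below -/
import Mathlib

section
/- The system of equations kl = 1, μl³ + k³ = l with k, l > 0 has a real solution if and only if μ ≤ 2√3/9. Moreover, if μ ≤ 0 or μ = 2√3/9 the solution is unique, and if 0 < μ < 2√3/9 there are exactly two distinct solutions. -/
open Real Set

private lemma aux_sq_inj {a b : ℝ} (ha : 0 < a) (hb : 0 < b) (h : a^2 = b^2) : a = b := by
  have h0 : (a - b) * (a + b) = 0 := by ring_nf; linarith
  rcases mul_eq_zero.mp h0 with h | h
  · linarith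
  · linarith

private lemma aux_sol_to_root (μ k l : ℝ) (hk : 0 < k) (hl : 0 < l) (hkl : k * l = 1)
    (heq : μ * l ^ 3 + k ^ 3 = l) :
    (k^2)^3 - k^2 + μ = 0 ∧ l = 1/k := by
  have hl' : l = 1/k := by field_simp; linarith [hkl, mul_comm k l]
  subst hl'
  refine ⟨?_, rfl⟩
  field_simp at heq
  nlinarith [heq]

private lemma aux_root_to_sol (μ m : ℝ) (hm : 0 < m) (hr : m^3 - m + μ = 0) :
    0 < Real.sqrt m ∧ 0 < 1/Real.sqrt m ∧ Real.sqrt m * (1/Real.sqrt m) = 1 ∧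
      μ * (1/Real.sqrt m)^3 + (Real.sqrt m)^3 = 1/Real.sqrt m := by
  have hk : 0 < Real.sqrt m := Real.sqrt_pos.mpr hm
  have hk2 : (Real.sqrt m)^2 = m := Real.sq_sqrt hm.le
  set k := Real.sqrt m with hkdef
  have h6 : k^6 = m^3 := by rw [← hk2]; ring
  have key : μ + k^6 = k^2 := by rw [h6, hk2]; linarith
  refine ⟨hk, by positivity, by field_simp, ?_⟩
  field_simp
  linear_combination key

private lemma aux_root_bound (μ m : ℝ) (hm : 0 < m) (hr : m^3 - m + μ = 0) :
    μ ≤ 2 * Real.sqrt 3 / 9 := by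
  have hs : (Real.sqrt 3)^2 = 3 := Real.sq_sqrt (by norm_num)
  have hs0 : (0:ℝ) < Real.sqrt 3 := Real.sqrt_pos.mpr (by norm_num)
  nlinarith [sq_nonneg (m - Real.sqrt 3 / 3), mul_pos hm hm]

private lemma aux_root_exists (μ : ℝ) (h : μ ≤ 2 * Real.sqrt 3 / 9) :
    ∃ m : ℝ, 0 < m ∧ m^3 - m + μ = 0 := by
  have hs : (Real.sqrt 3)^2 = 3 := Real.sq_sqrt (by norm_num)
  have hs0 : (0:ℝ) < Real.sqrt 3 := Real.sqrt_pos.mpr (by norm_num)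
  set g : ℝ → ℝ := fun m => m^3 - m + μ with hg
  have hcont : Continuous g := by continuity
  rcases le_or_gt μ 0 with hμ | hμ
  · have h1 : g 1 ≤ 0 := by simp [hg]; linarith
    have h2 : 0 ≤ g (2 - μ) := by
      simp [hg]
      nlinarith [mul_nonneg (mul_nonneg (neg_nonneg.mpr hμ) (neg_nonneg.mpr hμ)) (neg_nonneg.mpr hμ), sq_nonneg μ]
    obtain ⟨m, hm, hgm⟩ := intermediate_value_Icc (by linarith : (1:ℝ) ≤ 2 - μ)
      hcont.continuousOn ⟨h1, h2⟩
    exact ⟨m, by linarith [hm.1], hgm⟩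
  · have h1 : 0 ≤ g 0 := by simp [hg]; linarith
    have h2 : g (Real.sqrt 3 / 3) ≤ 0 := by simp [hg]; nlinarith
    obtain ⟨m, hm, hgm⟩ := intermediate_value_Icc' (by positivity : (0:ℝ) ≤ Real.sqrt 3 / 3)
      hcont.continuousOn ⟨h2, h1⟩
    refine ⟨m, ?_, hgm⟩
    rcases hm.1.lt_or_eq with h' | h'
    · exact h'
    · exfalso; rw [← h'] at hgm; simp [hg] at hgm; linarith

private lemma aux_root_rel (μ m₁ m₂ : ℝ) (h1 : m₁^3 - m₁ + μ = 0) (h2 : m₂^3 - m₂ + μ = 0)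
    (hne : m₁ ≠ m₂) : m₁^2 + m₁*m₂ + m₂^2 = 1 := by
  have h : (m₁ - m₂) * (m₁^2 + m₁*m₂ + m₂^2 - 1) = 0 := by nlinarith
  rcases mul_eq_zero.mp h with h | h
  · exact absurd (by linarith) hne
  · linarith

-- for μ ≤ 0 or μ = 2√3/9, positive roots are unique
private lemma aux_root_unique (μ : ℝ) (hμ : μ ≤ 0 ∨ μ = 2 * Real.sqrt 3 / 9)
    (m₁ m₂ : ℝ) (hm1 : 0 < m₁) (hm2 : 0 < m₂)
    (h1 : m₁^3 - m₁ + μ = 0) (h2 : m₂^3 - m₂ + μ = 0) : m₁ = m₂ := by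
  have hs : (Real.sqrt 3)^2 = 3 := Real.sq_sqrt (by norm_num)
  have hs0 : (0:ℝ) < Real.sqrt 3 := Real.sqrt_pos.mpr (by norm_num)
  rcases hμ with hμ | hμ
  · by_contra hne
    have hrel := aux_root_rel μ m₁ m₂ h1 h2 hne
    have hlt : m₁ < 1 := by nlinarith
    nlinarith [mul_pos hm1 (mul_pos hm1 hm1)]
  · -- μ = 2√3/9: each root is √3/3
    have e1 : m₁ = Real.sqrt 3 / 3 := by
      have hfac : (m₁ - Real.sqrt 3 / 3)^2 * (m₁ + 2 * Real.sqrt 3 / 3) = 0 := by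
        subst hμ; nlinarith [h1]
      rcases mul_eq_zero.mp hfac with h | h
      · have := pow_eq_zero_iff (n := 2) (by norm_num) |>.mp h
        linarith
      · linarith
    have e2 : m₂ = Real.sqrt 3 / 3 := by
      have hfac : (m₂ - Real.sqrt 3 / 3)^2 * (m₂ + 2 * Real.sqrt 3 / 3) = 0 := by
        subst hμ; nlinarith [h2]
      rcases mul_eq_zero.mp hfac with h | h
      · have := pow_eq_zero_iff (n := 2) (by norm_num) |>.mp h
        linarith
      · linarith
    rw [e1, e2]

-- for 0 < μ < 2√3/9 there are two distinct positive roots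
private lemma aux_two_roots (μ : ℝ) (h0 : 0 < μ) (hc : μ < 2 * Real.sqrt 3 / 9) :
    ∃ m₁ m₂ : ℝ, 0 < m₁ ∧ 0 < m₂ ∧ m₁ ≠ m₂ ∧
      m₁^3 - m₁ + μ = 0 ∧ m₂^3 - m₂ + μ = 0 := by
  have hs : (Real.sqrt 3)^2 = 3 := Real.sq_sqrt (by norm_num)
  have hs0 : (0:ℝ) < Real.sqrt 3 := Real.sqrt_pos.mpr (by norm_num)
  set g : ℝ → ℝ := fun m => m^3 - m + μ with hg
  have hcont : Continuous g := by continuity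
  have hga : g (Real.sqrt 3 / 3) < 0 := by simp [hg]; nlinarith
  have hg0 : 0 < g 0 := by simp [hg]; linarith
  have hg1 : 0 < g 1 := by simp [hg]; linarith
  have hsle : Real.sqrt 3 / 3 ≤ 1 := by nlinarith
  obtain ⟨m₁, hm1, hgm1⟩ := intermediate_value_Icc' (by positivity : (0:ℝ) ≤ Real.sqrt 3 / 3)
    hcont.continuousOn ⟨hga.le, hg0.le⟩
  obtain ⟨m₂, hm2, hgm2⟩ := intermediate_value_Icc hsle hcont.continuousOn ⟨hga.le, hg1.le⟩
  have hm1pos : 0 < m₁ := by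
    rcases hm1.1.lt_or_eq with h' | h'
    · exact h'
    · exfalso; rw [← h'] at hgm1; simp [hg] at hgm1; linarith
  have hm1lt : m₁ < Real.sqrt 3 / 3 := by
    rcases hm1.2.lt_or_eq with h' | h'
    · exact h'
    · exfalso; rw [h'] at hgm1; linarith
  have hm2gt : Real.sqrt 3 / 3 < m₂ := by
    rcases hm2.1.lt_or_eq with h' | h'
    · exact h'
    · exfalso; rw [← h'] at hgm2; linarith
  exact ⟨m₁, m₂, hm1pos, by linarith, by intro h; rw [h] at hm1lt; linarith, hgm1, hgm2⟩

theorem system_kl_solutions (μ : ℝ) :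
    ((∃ k l : ℝ, 0 < k ∧ 0 < l ∧ k * l = 1 ∧ μ * l ^ 3 + k ^ 3 = l) ↔
      μ ≤ 2 * Real.sqrt 3 / 9) ∧
    ((μ ≤ 0 ∨ μ = 2 * Real.sqrt 3 / 9) →
      ∃! p : ℝ × ℝ, 0 < p.1 ∧ 0 < p.2 ∧ p.1 * p.2 = 1 ∧ μ * p.2 ^ 3 + p.1 ^ 3 = p.2) ∧
    ((0 < μ ∧ μ < 2 * Real.sqrt 3 / 9) →
      ∃ p q : ℝ × ℝ, p ≠ q ∧
        (0 < p.1 ∧ 0 < p.2 ∧ p.1 * p.2 = 1 ∧ μ * p.2 ^ 3 + p.1 ^ 3 = p.2) ∧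
        (0 < q.1 ∧ 0 < q.2 ∧ q.1 * q.2 = 1 ∧ μ * q.2 ^ 3 + q.1 ^ 3 = q.2) ∧
        ∀ r : ℝ × ℝ, (0 < r.1 ∧ 0 < r.2 ∧ r.1 * r.2 = 1 ∧ μ * r.2 ^ 3 + r.1 ^ 3 = r.2) →
          r = p ∨ r = q) := by
  have hs0 : (0:ℝ) < Real.sqrt 3 := Real.sqrt_pos.mpr (by norm_num)
  refine ⟨⟨?_, ?_⟩, ?_, ?_⟩
  · rintro ⟨k, l, hk, hl, hkl, heq⟩
    obtain ⟨hr, -⟩ := aux_sol_to_root μ k l hk hl hkl heq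
    exact aux_root_bound μ (k^2) (by positivity) hr
  · intro h
    obtain ⟨m, hm, hr⟩ := aux_root_exists μ h
    obtain ⟨a, b, c, d⟩ := aux_root_to_sol μ m hm hr
    exact ⟨Real.sqrt m, 1/Real.sqrt m, a, b, c, d⟩
  · intro hμ
    have hμ' : μ ≤ 2 * Real.sqrt 3 / 9 := by
      rcases hμ with h | h
      · linarith
      · exact le_of_eq h
    obtain ⟨m, hm, hr⟩ := aux_root_exists μ hμ'
    obtain ⟨a, b, c, d⟩ := aux_root_to_sol μ m hm hr
    refine ⟨(Real.sqrt m, 1/Real.sqrt m), ⟨a, b, c, d⟩, ?_⟩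
    rintro ⟨k, l⟩ ⟨hk, hl, hkl, heq⟩
    obtain ⟨hr', hl'⟩ := aux_sol_to_root μ k l hk hl hkl heq
    have hmm : k^2 = m := aux_root_unique μ hμ (k^2) m (by positivity) hm hr' hr
    have hk1 : k = Real.sqrt m := by
      refine aux_sq_inj hk (Real.sqrt_pos.mpr hm) ?_
      rw [Real.sq_sqrt hm.le, hmm]
    exact Prod.ext hk1 (by rw [hl', hk1])
  · rintro ⟨h0, hc⟩
    obtain ⟨m₁, m₂, hm1, hm2, hne, hr1, hr2⟩ := aux_two_roots μ h0 hc
    obtain ⟨a1, b1, c1, d1⟩ := aux_root_to_sol μ m₁ hm1 hr1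
    obtain ⟨a2, b2, c2, d2⟩ := aux_root_to_sol μ m₂ hm2 hr2
    refine ⟨(Real.sqrt m₁, 1/Real.sqrt m₁), (Real.sqrt m₂, 1/Real.sqrt m₂), ?_,
      ⟨a1, b1, c1, d1⟩, ⟨a2, b2, c2, d2⟩, ?_⟩
    · intro h
      apply hne
      have h1 := congrArg Prod.fst h
      simp at h1
      calc m₁ = (Real.sqrt m₁)^2 := (Real.sq_sqrt hm1.le).symm
        _ = (Real.sqrt m₂)^2 := by rw [h1]
        _ = m₂ := Real.sq_sqrt hm2.le
    · rintro ⟨k, l⟩ ⟨hk, hl, hkl, heq⟩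
      obtain ⟨hr', hl'⟩ := aux_sol_to_root μ k l hk hl hkl heq
      have hcase : k^2 = m₁ ∨ k^2 = m₂ := by
        by_contra hcon
        push_neg at hcon
        obtain ⟨hc1, hc2⟩ := hcon
        have e1 := aux_root_rel μ (k^2) m₁ hr' hr1 hc1
        have e2 := aux_root_rel μ (k^2) m₂ hr' hr2 hc2
        have hfac : (m₁ - m₂) * (k^2 + m₁ + m₂) = 0 := by linear_combination e1 - e2
        rcases mul_eq_zero.mp hfac with h | h
        · exact hne (by linarith)
        · nlinarith [sq_nonneg k]
      rcases hcase with h | h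
      · left
        have hk1 : k = Real.sqrt m₁ := by
          refine aux_sq_inj hk (Real.sqrt_pos.mpr hm1) ?_
          rw [Real.sq_sqrt hm1.le, h]
        exact Prod.ext hk1 (by rw [hl', hk1])
      · right
        have hk1 : k = Real.sqrt m₂ := by
          refine aux_sq_inj hk (Real.sqrt_pos.mpr hm2) ?_
          rw [Real.sq_sqrt hm2.le, h]
        exact Prod.ext hk1 (by rw [hl', hk1])
end

section
/- If μ = 0 and k, l > 0 satisfy k² + l²/3 ≤ (4/3)k³l, then k² + l²/3 ≥ 4/3. -/
theorem nehari_lower_bound_mu_zero (k l : ℝ) (hk : 0 < k) (hl : 0 < l)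
    (h : k ^ 2 + l ^ 2 / 3 ≤ (4 / 3) * k ^ 3 * l) :
    k ^ 2 + l ^ 2 / 3 ≥ 4 / 3 := by
  have hS : 0 < k ^ 2 + l ^ 2 / 3 := by positivity
  have amgm : 256 * (k ^ 2) ^ 3 * l ^ 2 ≤ (3 * k ^ 2 + l ^ 2) ^ 4 := by
    nlinarith [sq_nonneg (k ^ 2 - l ^ 2), sq_nonneg k, sq_nonneg l,
      mul_nonneg (sq_nonneg k) (sq_nonneg (k ^ 2 - l ^ 2)),
      mul_nonneg (sq_nonneg l) (sq_nonneg (k ^ 2 - l ^ 2)),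
      mul_nonneg (mul_nonneg (sq_nonneg k) (sq_nonneg k)) (sq_nonneg (k ^ 2 - l ^ 2))]
  have h2 : (3 * (k ^ 2 + l ^ 2 / 3)) ^ 2 ≤ (4 * k ^ 3 * l) ^ 2 := by
    have hkl : 0 < k ^ 3 * l := by positivity
    nlinarith [h, hS, hkl]
  have h3 : 144 * (k ^ 2 + l ^ 2 / 3) ^ 2 ≤ 81 * (k ^ 2 + l ^ 2 / 3) ^ 4 := by
    nlinarith [h2, amgm]
  nlinarith [h3, hS, mul_pos hS hS, sq_nonneg (k ^ 2 + l ^ 2 / 3 - 4 / 3),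
    mul_pos (mul_pos hS hS) hS]
end

section
/- If 0 < μ < √6/9, then the function ψ(m) = (3m² + 1)²/(3(4m³ + μ)) on (0,∞) has exactly two critical points m₁ < m₂, both solving m³ − m + μ = 0, and its global minimum on (0,∞) is attained at m₂ with ψ(m₂) < 1/(3μ) = lim_{m→0⁺} ψ(m). -/
set_option maxHeartbeats 1000000 in
theorem psi_critical_points (μ : ℝ) (hμ0 : 0 < μ) (hμ : μ < Real.sqrt 6 / 9)
    (ψ : ℝ → ℝ) (hψ : ∀ m, ψ m = (3 * m ^ 2 + 1) ^ 2 / (3 * (4 * m ^ 3 + μ))) :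
    ∃ m₁ m₂ : ℝ, 0 < m₁ ∧ m₁ < m₂ ∧
      m₁ ^ 3 - m₁ + μ = 0 ∧ m₂ ^ 3 - m₂ + μ = 0 ∧
      (∀ m : ℝ, 0 < m → (deriv ψ m = 0 ↔ (m = m₁ ∨ m = m₂))) ∧
      (∀ m : ℝ, 0 < m → ψ m₂ ≤ ψ m) ∧
      ψ m₂ < 1 / (3 * μ) ∧
      Filter.Tendsto ψ (nhdsWithin 0 (Set.Ioi 0)) (nhds (1 / (3 * μ))) := by
  obtain rfl : ψ = fun m => (3 * m ^ 2 + 1) ^ 2 / (3 * (4 * m ^ 3 + μ)) := funext hψ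
  clear hψ
  set ψ : ℝ → ℝ := fun m => (3 * m ^ 2 + 1) ^ 2 / (3 * (4 * m ^ 3 + μ)) with hψdef
  -- basic numeric facts about sqrt
  have h3 : (0:ℝ) < Real.sqrt 3 := Real.sqrt_pos.mpr (by norm_num)
  have h6 : (0:ℝ) < Real.sqrt 6 := Real.sqrt_pos.mpr (by norm_num)
  have h3sq : Real.sqrt 3 ^ 2 = 3 := Real.sq_sqrt (by norm_num)
  have h6sq : Real.sqrt 6 ^ 2 = 6 := Real.sq_sqrt (by norm_num)
  have h36 : Real.sqrt 3 < Real.sqrt 6 := by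
    apply Real.sqrt_lt_sqrt <;> norm_num
  have h6lt3 : Real.sqrt 6 < 3 := by
    nlinarith [h6sq, h6]
  -- continuity of the cubic
  have hfc : Continuous fun x : ℝ => x ^ 3 - x + μ := by continuity
  -- f (√3/3) < 0
  have hfa : (Real.sqrt 3 / 3) ^ 3 - (Real.sqrt 3 / 3) + μ < 0 := by
    have : (Real.sqrt 3 / 3) ^ 3 - (Real.sqrt 3 / 3) = -(2 * Real.sqrt 3 / 9) := by
      field_simp
      nlinarith [h3sq]
    rw [this]
    have h63 : Real.sqrt 6 < 2 * Real.sqrt 3 := by nlinarith [h3sq, h6sq, h3, h6]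
    nlinarith [hμ]
  -- f (√6/3) < 0
  have hfb : (Real.sqrt 6 / 3) ^ 3 - (Real.sqrt 6 / 3) + μ < 0 := by
    have : (Real.sqrt 6 / 3) ^ 3 - (Real.sqrt 6 / 3) = -(Real.sqrt 6 / 9) := by
      field_simp
      nlinarith [h6sq]
    rw [this]
    linarith [hμ]
  -- root m₁ ∈ (0, √3/3)
  obtain ⟨m₁, hm₁mem, hm₁⟩ : ∃ x ∈ Set.Ioo (0:ℝ) (Real.sqrt 3 / 3), x ^ 3 - x + μ = 0 := by
    have hsub : Set.Ioo ((Real.sqrt 3 / 3) ^ 3 - (Real.sqrt 3 / 3) + μ) ((0:ℝ) ^ 3 - 0 + μ)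
        ⊆ (fun x : ℝ => x ^ 3 - x + μ) '' Set.Ioo 0 (Real.sqrt 3 / 3) :=
      intermediate_value_Ioo' (by positivity) hfc.continuousOn
    have h0 : (0:ℝ) ∈ Set.Ioo ((Real.sqrt 3 / 3) ^ 3 - (Real.sqrt 3 / 3) + μ) ((0:ℝ) ^ 3 - 0 + μ) := by
      constructor
      · exact hfa
      · simpa using hμ0
    obtain ⟨x, hx, hx0⟩ := hsub h0
    exact ⟨x, hx, hx0⟩
  -- root m₂ ∈ (√6/3, 1)
  obtain ⟨m₂, hm₂mem, hm₂⟩ : ∃ x ∈ Set.Ioo (Real.sqrt 6 / 3) 1, x ^ 3 - x + μ = 0 := by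
    have hab : Real.sqrt 6 / 3 ≤ 1 := by nlinarith
    have hsub : Set.Ioo ((Real.sqrt 6 / 3) ^ 3 - (Real.sqrt 6 / 3) + μ) ((1:ℝ) ^ 3 - 1 + μ)
        ⊆ (fun x : ℝ => x ^ 3 - x + μ) '' Set.Ioo (Real.sqrt 6 / 3) 1 :=
      intermediate_value_Ioo hab hfc.continuousOn
    have h0 : (0:ℝ) ∈ Set.Ioo ((Real.sqrt 6 / 3) ^ 3 - (Real.sqrt 6 / 3) + μ) ((1:ℝ) ^ 3 - 1 + μ) := by
      constructor
      · exact hfb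
      · simpa using hμ0
    obtain ⟨x, hx, hx0⟩ := hsub h0
    exact ⟨x, hx, hx0⟩
  obtain ⟨hm₁0, hm₁a⟩ := hm₁mem
  obtain ⟨hm₂b, hm₂1⟩ := hm₂mem
  have hm₁sq : m₁ ^ 2 < 1 / 3 := by nlinarith [h3sq, hm₁0, hm₁a, h3]
  have hm₂sq : 2 / 3 < m₂ ^ 2 := by nlinarith [h6sq, hm₂b, h6]
  have hm₁₂ : m₁ < m₂ := by nlinarith [hm₁sq, hm₂sq, hm₁0, hm₂b, h6]
  have hm₂0 : 0 < m₂ := lt_trans hm₁0 hm₁₂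
  -- symmetric fn fact
  have hs : m₁ ^ 2 + m₁ * m₂ + m₂ ^ 2 = 1 := by
    have h := mul_eq_zero.mp (show (m₁ - m₂) * (m₁ ^ 2 + m₁ * m₂ + m₂ ^ 2 - 1) = 0 by
      linear_combination hm₁ - hm₂)
    rcases h with h | h
    · exact absurd h (sub_ne_zero.mpr hm₁₂.ne)
    · linarith [sub_eq_zero.mp h]
  -- factorization of the cubic
  have hfact : ∀ m : ℝ, m ^ 3 - m + μ = (m - m₁) * (m - m₂) * (m + m₁ + m₂) := by
    intro m
    linear_combination hm₁ + (m - m₁) * hs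
  -- derivative of ψ
  have hderiv : ∀ m : ℝ, 0 < m → HasDerivAt ψ
      (36 * m * (3 * m ^ 2 + 1) * (m ^ 3 - m + μ) / (3 * (4 * m ^ 3 + μ)) ^ 2) m := by
    intro m hm
    have hD0 : (3 * (4 * m ^ 3 + μ)) ≠ 0 := by positivity
    have hx : HasDerivAt (fun x : ℝ => 3 * x ^ 2 + 1) (6 * m) m := by
      have := ((hasDerivAt_pow 2 m).const_mul (3:ℝ)).add_const 1
      exact this.congr_deriv (by norm_num; ring)
    have hN : HasDerivAt (fun x : ℝ => (3 * x ^ 2 + 1) ^ 2)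
        (2 * (3 * m ^ 2 + 1) ^ 1 * (6 * m)) m := hx.pow 2
    have hD : HasDerivAt (fun x : ℝ => 3 * (4 * x ^ 3 + μ)) (3 * (4 * (3 * m ^ 2))) m := by
      have := (((hasDerivAt_pow 3 m).const_mul (4:ℝ)).add_const μ).const_mul (3:ℝ)
      exact this.congr_deriv (by norm_num)
    have h := hN.div hD hD0
    refine h.congr_deriv ?_
    field_simp
    ring
  have hderiv' : ∀ m : ℝ, 0 < m →
      deriv ψ m = 36 * m * (3 * m ^ 2 + 1) * (m ^ 3 - m + μ) / (3 * (4 * m ^ 3 + μ)) ^ 2 :=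
    fun m hm => (hderiv m hm).deriv
  -- critical points iff
  have hiff : ∀ m : ℝ, 0 < m → (deriv ψ m = 0 ↔ (m = m₁ ∨ m = m₂)) := by
    intro m hm
    rw [hderiv' m hm, div_eq_zero_iff]
    have hD : ((3 * (4 * m ^ 3 + μ)) ^ 2 : ℝ) ≠ 0 := by positivity
    constructor
    · rintro (h | h)
      · have h3 : (0:ℝ) < 36 * m * (3 * m ^ 2 + 1) := by positivity
        have hf : m ^ 3 - m + μ = 0 := by
          rcases mul_eq_zero.mp h with h | h
          · exact absurd h h3.ne'
          · exact h
        rw [hfact m] at hf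
        have hpos : 0 < m + m₁ + m₂ := by linarith
        rcases mul_eq_zero.mp hf with h | h
        · rcases mul_eq_zero.mp h with h | h
          · left; linarith [sub_eq_zero.mp h]
          · right; linarith [sub_eq_zero.mp h]
        · exact absurd h hpos.ne'
      · exact absurd h hD
    · rintro (rfl | rfl)
      · left; rw [hm₁, mul_zero]
      · left; rw [hm₂, mul_zero]
  -- continuity on positive sets
  have hcont : ∀ s : Set ℝ, (∀ x ∈ s, (0:ℝ) < x) → ContinuousOn ψ s := by
    intro s hs x hx
    exact ((hderiv x (hs x hx)).continuousAt).continuousWithinAt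
  -- ψ strictly decreasing on [m₁, m₂]
  have hanti : StrictAntiOn ψ (Set.Icc m₁ m₂) := by
    apply strictAntiOn_of_deriv_neg (convex_Icc _ _)
      (hcont _ (fun x hx => lt_of_lt_of_le hm₁0 hx.1))
    intro x hx
    rw [interior_Icc] at hx
    have hx0 : 0 < x := lt_trans hm₁0 hx.1
    rw [hderiv' x hx0]
    apply div_neg_of_neg_of_pos _ (by positivity)
    apply mul_neg_of_pos_of_neg (by positivity)
    rw [hfact]
    have h1 : 0 < x - m₁ := by linarith [hx.1]
    have h2 : x - m₂ < 0 := by linarith [hx.2]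
    have h3 : 0 < x + m₁ + m₂ := by linarith
    exact mul_neg_of_neg_of_pos (mul_neg_of_pos_of_neg h1 h2) h3
  -- ψ strictly increasing on [m₂, ∞)
  have hmono : StrictMonoOn ψ (Set.Ici m₂) := by
    apply strictMonoOn_of_deriv_pos (convex_Ici _)
      (hcont _ (fun x hx => lt_of_lt_of_le hm₂0 hx))
    intro x hx
    rw [interior_Ici] at hx
    have hx0 : 0 < x := lt_trans hm₂0 hx
    rw [hderiv' x hx0]
    apply div_pos _ (by positivity)
    apply mul_pos (by positivity)
    rw [hfact]
    have hx' : m₂ < x := hx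
    have h1 : 0 < x - m₁ := by linarith
    have h2 : 0 < x - m₂ := by linarith
    have h3 : 0 < x + m₁ + m₂ := by linarith
    positivity
  -- ψ m₂ < 1/(3μ)
  have hψm₂ : ψ m₂ < 1 / (3 * μ) := by
    have hd : 0 < 3 * (4 * m₂ ^ 3 + μ) := by nlinarith [pow_pos hm₂0 3]
    show (3 * m₂ ^ 2 + 1) ^ 2 / (3 * (4 * m₂ ^ 3 + μ)) < 1 / (3 * μ)
    rw [div_lt_div_iff₀ hd (by linarith)]
    nlinarith [mul_pos (mul_pos (pow_pos hm₂0 3)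
      (show (0:ℝ) < 3 * m₂ ^ 2 + 1 by nlinarith [sq_nonneg m₂]))
      (show (0:ℝ) < 3 * m₂ ^ 2 - 2 by nlinarith [hm₂sq]), hm₂]
  -- lower bound on (0, m₁]
  have hlower : ∀ m : ℝ, 0 < m → m ≤ m₁ → 1 / (3 * μ) ≤ ψ m := by
    intro m hm hmm₁
    have hmsq : m ^ 2 < 1 / 3 := by nlinarith [hm₁sq, hm, hmm₁, hm₁0]
    have hinner : (0:ℝ) ≤ 1 - m ^ 2 - m * m₁ - m₁ ^ 2 := by
      nlinarith [hm₁sq, mul_le_mul_of_nonneg_left hmm₁ hm.le, hmsq]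
    have hf : 0 ≤ m ^ 3 - m + μ := by
      nlinarith [mul_nonneg (sub_nonneg.mpr hmm₁) hinner, hm₁]
    have hd : 0 < 3 * (4 * m ^ 3 + μ) := by nlinarith [pow_pos hm 3]
    show 1 / (3 * μ) ≤ (3 * m ^ 2 + 1) ^ 2 / (3 * (4 * m ^ 3 + μ))
    rw [div_le_div_iff₀ (by linarith) hd]
    nlinarith [mul_le_mul_of_nonneg_right (show m - m ^ 3 ≤ μ by nlinarith [hf])
        (show (0:ℝ) ≤ 9 * m ^ 4 + 6 * m ^ 2 by positivity),
      mul_pos (pow_pos hm 3) (show (0:ℝ) < 2 + 3 * m ^ 2 - 9 * m ^ 4 by nlinarith [hmsq, sq_nonneg (m ^ 2)])]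
  -- global minimum at m₂
  have hmin : ∀ m : ℝ, 0 < m → ψ m₂ ≤ ψ m := by
    intro m hm
    rcases le_or_gt m m₁ with h | h
    · linarith [hlower m hm h, hψm₂]
    rcases le_or_gt m m₂ with h2 | h2
    · exact hanti.antitoneOn ⟨h.le, h2⟩ ⟨hm₁₂.le, le_refl m₂⟩ h2
    · exact hmono.monotoneOn Set.self_mem_Ici (Set.mem_Ici.mpr h2.le) h2.le
  -- limit at 0⁺
  have htend : Filter.Tendsto ψ (nhdsWithin 0 (Set.Ioi 0)) (nhds (1 / (3 * μ))) := by
    have hc : ContinuousAt ψ 0 := by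
      apply ContinuousAt.div
      · fun_prop
      · fun_prop
      · norm_num
        positivity
    have h0 : ψ 0 = 1 / (3 * μ) := by
      show (3 * (0:ℝ) ^ 2 + 1) ^ 2 / (3 * (4 * (0:ℝ) ^ 3 + μ)) = 1 / (3 * μ)
      norm_num
    rw [← h0]
    exact (hc.continuousWithinAt).tendsto
  exact ⟨m₁, m₂, hm₁0, hm₁₂, hm₁, hm₂, hiff, hmin, hψm₂, htend⟩
end

section
/- If μ = √6/9 then for the function ψ(m) = (3m² + 1)²/(3(4m³ + μ)) on (0,∞), the infimum equals 1/(3μ), i.e. ψ(m) ≥ 1/(3μ) for all m > 0 with equality attained at the largest positive root of m³ − m + μ = 0, and lim_{m→0⁺} ψ(m) = 1/(3μ). -/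
theorem psi_inf_at_critical_mu (μ : ℝ) (hμ : μ = Real.sqrt 6 / 9)
    (ψ : ℝ → ℝ) (hψ : ∀ m, ψ m = (3 * m ^ 2 + 1) ^ 2 / (3 * (4 * m ^ 3 + μ))) :
    (∀ m : ℝ, 0 < m → ψ m ≥ 1 / (3 * μ)) ∧
    (∃ m₀ : ℝ, 0 < m₀ ∧ m₀ ^ 3 - m₀ + μ = 0 ∧
      (∀ m : ℝ, 0 < m → m ^ 3 - m + μ = 0 → m ≤ m₀) ∧
      ψ m₀ = 1 / (3 * μ)) ∧
    Filter.Tendsto ψ (nhdsWithin 0 (Set.Ioi 0)) (nhds (1 / (3 * μ))) := by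
  have hs : (0:ℝ) < Real.sqrt 6 := Real.sqrt_pos.mpr (by norm_num)
  have hs2 : Real.sqrt 6 ^ 2 = 6 := Real.sq_sqrt (by norm_num)
  set s := Real.sqrt 6 with hsdef
  have hμpos : 0 < μ := by rw [hμ]; positivity
  refine ⟨?_, ⟨s/3, by positivity, by nlinarith, ?_, ?_⟩, ?_⟩
  · intro m hm
    have hden : 0 < 3 * (4 * m ^ 3 + μ) := by nlinarith [pow_pos hm 3]
    rw [hψ, ge_iff_le, div_le_div_iff₀ (by positivity) hden]
    have key : s * (4 * m ^ 3 + μ - μ * (3 * m ^ 2 + 1) ^ 2)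
        = -(2/3) * m ^ 2 * (3 * m - s) ^ 2 := by
      linear_combination (s * (1 - (3 * m ^ 2 + 1) ^ 2)) * hμ - m ^ 4 * hs2
    nlinarith [key, hs, mul_nonneg (sq_nonneg m) (sq_nonneg (3 * m - s))]
  · intro m hm heq
    by_contra h
    push_neg at h
    have h1 : 0 < m - s / 3 := by linarith
    have hq : 1 < m ^ 2 + (s / 3) * m - 1 / 3 := by
      nlinarith [mul_pos h1 (by positivity : (0:ℝ) < m + s / 3),
        mul_lt_mul_of_pos_left h (by positivity : (0:ℝ) < s / 3)]
    nlinarith [mul_pos h1 (by linarith : (0:ℝ) < m ^ 2 + (s / 3) * m - 1 / 3)]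
  · rw [hψ, hμ]
    rw [div_eq_div_iff (by positivity) (by positivity)]
    nlinarith
  · have hfun : ψ = fun m => (3 * m ^ 2 + 1) ^ 2 / (3 * (4 * m ^ 3 + μ)) := funext hψ
    rw [hfun]
    have hc : ContinuousAt (fun m : ℝ => (3 * m ^ 2 + 1) ^ 2 / (3 * (4 * m ^ 3 + μ))) 0 := by
      apply ContinuousAt.div (by fun_prop) (by fun_prop)
      norm_num
      exact hμpos.ne'
    have ht := hc.tendsto
    simp only [ne_eq, OfNat.ofNat_ne_zero, not_false_eq_true, zero_pow, mul_zero, zero_add,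
      mul_one, one_pow, zero_mul] at ht
    exact ht.mono_left nhdsWithin_le_nhds
end

section
/- If √6/9 < μ ≤ 2√3/9 then ψ(m) = (3m² + 1)²/(3(4m³ + μ)) satisfies ψ(m) > 1/(3μ) for every m > 0. -/
theorem psi_strictly_above (μ : ℝ) (hμ1 : Real.sqrt 6 / 9 < μ)
    (hμ2 : μ ≤ 2 * Real.sqrt 3 / 9) (m : ℝ) (hm : 0 < m) :
    (3 * m ^ 2 + 1) ^ 2 / (3 * (4 * m ^ 3 + μ)) > 1 / (3 * μ) := by
  have hs : Real.sqrt 6 ^ 2 = 6 := Real.sq_sqrt (by norm_num)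
  have hs0 : 0 < Real.sqrt 6 := Real.sqrt_pos.2 (by norm_num)
  have hμ0 : 0 < μ := lt_trans (by positivity) hμ1
  rw [gt_iff_lt, div_lt_div_iff₀ (by positivity) (by positivity)]
  nlinarith [sq_nonneg (Real.sqrt 6 * m - 2), mul_pos hm hm,
    mul_pos (mul_pos hm hm) hm, mul_pos hs0 (mul_pos hm hm),
    mul_pos (sub_pos.2 hμ1) (mul_pos hm hm),
    mul_nonneg (mul_nonneg hm.le hm.le) (sq_nonneg (Real.sqrt 6 * m - 2))]
end

section
/- Let μ ∈ ℝ and let k, l > 0 satisfy k² + (1/3)l² ≤ (4/3)k³l + (μ/3)l⁴. Define k̄ = k·√((3k² + l²)/(l(4k³ + μl³))) and l̄ = √(l(3k² + l²)/(4k³ + μl³)). Then 0 < k̄ ≤ k, 0 < l̄ ≤ l, k/l = k̄/l̄, and k̄² + (1/3)l̄² = (4/3)k̄³l̄ + (μ/3)l̄⁴. -/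
theorem rescaling_to_curve (μ k l : ℝ) (hk : 0 < k) (hl : 0 < l)
    (h : k ^ 2 + (1 / 3) * l ^ 2 ≤ (4 / 3) * k ^ 3 * l + (μ / 3) * l ^ 4) :
    let kbar := k * Real.sqrt ((3 * k ^ 2 + l ^ 2) / (l * (4 * k ^ 3 + μ * l ^ 3)))
    let lbar := Real.sqrt (l * (3 * k ^ 2 + l ^ 2) / (4 * k ^ 3 + μ * l ^ 3))
    0 < kbar ∧ kbar ≤ k ∧ 0 < lbar ∧ lbar ≤ l ∧ k / l = kbar / lbar ∧
      kbar ^ 2 + (1 / 3) * lbar ^ 2 = (4 / 3) * kbar ^ 3 * lbar + (μ / 3) * lbar ^ 4 := by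
  intro kbar lbar
  have hS : (0:ℝ) < 3 * k ^ 2 + l ^ 2 := by positivity
  have hSD : 3 * k ^ 2 + l ^ 2 ≤ l * (4 * k ^ 3 + μ * l ^ 3) := by nlinarith
  have hD : 0 < 4 * k ^ 3 + μ * l ^ 3 := by nlinarith
  set A := (3 * k ^ 2 + l ^ 2) / (l * (4 * k ^ 3 + μ * l ^ 3)) with hA
  have hApos : 0 < A := div_pos hS (mul_pos hl hD)
  have hAle : A ≤ 1 := by rw [hA, div_le_one (mul_pos hl hD)]; exact hSD
  have hlbar : lbar = l * Real.sqrt A := by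
    show Real.sqrt _ = _
    rw [show l * (3 * k ^ 2 + l ^ 2) / (4 * k ^ 3 + μ * l ^ 3) = l ^ 2 * A from by
      rw [hA]; field_simp]
    rw [Real.sqrt_mul (by positivity), Real.sqrt_sq hl.le]
  have hkbar : kbar = k * Real.sqrt A := rfl
  have hsq : Real.sqrt A ^ 2 = A := Real.sq_sqrt hApos.le
  have hsA : 0 < Real.sqrt A := Real.sqrt_pos.2 hApos
  have hsle : Real.sqrt A ≤ 1 := Real.sqrt_le_one.mpr hAle
  have key : A * (l * (4 * k ^ 3 + μ * l ^ 3)) = 3 * k ^ 2 + l ^ 2 := by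
    rw [hA]; field_simp; exact div_self (ne_of_gt (by linarith))
  refine ⟨by positivity, ?_, by rw [hlbar]; positivity, ?_, ?_, ?_⟩
  · rw [hkbar]; nlinarith
  · rw [hlbar]; nlinarith
  · rw [hkbar, hlbar]
    rw [mul_comm k _, mul_comm l _, mul_div_mul_left _ _ (ne_of_gt hsA)]
  · rw [hkbar, hlbar]
    linear_combination (k ^ 2 + l ^ 2 / 3 - (4 / 3 * k ^ 3 * l + μ / 3 * l ^ 4) * (Real.sqrt A ^ 2 + A)) * hsq - (A / 3) * key
end

section
/- If 0 < μ < √6/9 and (k₁, l₁), (k₂, l₂) with k₁ < k₂ are the two solutions of the system kl = 1, μl³ + k³ = l, k, l > 0, then every pair (k, l) of positive reals satisfying k² + (1/3)l² ≤ (4/3)k³l + (μ/3)l⁴ obeys k² + (1/3)l² ≥ k₂² + (1/3)l₂², and moreover k₂² + (1/3)l₂² < 1/(3μ). -/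
set_option maxHeartbeats 800000

theorem nehari_lower_bound_small_mu (μ : ℝ) (hμ0 : 0 < μ) (hμ : μ < Real.sqrt 6 / 9)
    (k₁ l₁ k₂ l₂ : ℝ) (hk₁ : 0 < k₁) (hl₁ : 0 < l₁) (hk₂ : 0 < k₂) (hl₂ : 0 < l₂)
    (hlt : k₁ < k₂)
    (hsol₁ : k₁ * l₁ = 1 ∧ μ * l₁ ^ 3 + k₁ ^ 3 = l₁)
    (hsol₂ : k₂ * l₂ = 1 ∧ μ * l₂ ^ 3 + k₂ ^ 3 = l₂)
    (hall : ∀ k l : ℝ, 0 < k → 0 < l → k * l = 1 → μ * l ^ 3 + k ^ 3 = l →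
      (k = k₁ ∧ l = l₁) ∨ (k = k₂ ∧ l = l₂)) :
    (∀ k l : ℝ, 0 < k → 0 < l →
      k ^ 2 + (1 / 3) * l ^ 2 ≤ (4 / 3) * k ^ 3 * l + (μ / 3) * l ^ 4 →
      k ^ 2 + (1 / 3) * l ^ 2 ≥ k₂ ^ 2 + (1 / 3) * l₂ ^ 2) ∧
    k₂ ^ 2 + (1 / 3) * l₂ ^ 2 < 1 / (3 * μ) := by
  obtain ⟨h1, h2⟩ := hsol₂
  obtain ⟨h1', h2'⟩ := hsol₁
  -- m := k₂^2 satisfies m³ = m − μ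
  have hmcube : (k₂ ^ 2) ^ 3 = k₂ ^ 2 - μ := by
    linear_combination k₂ ^ 3 * h2 + (k₂ ^ 2 - μ * (1 + k₂ * l₂ + k₂ ^ 2 * l₂ ^ 2)) * h1
  have hmcube1 : (k₁ ^ 2) ^ 3 = k₁ ^ 2 - μ := by
    linear_combination k₁ ^ 3 * h2' + (k₁ ^ 2 - μ * (1 + k₁ * l₁ + k₁ ^ 2 * l₁ ^ 2)) * h1'
  have hm0 : 0 < k₂ ^ 2 := by positivity
  have hm1lt : k₁ ^ 2 < k₂ ^ 2 := by nlinarith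
  have hfac : (k₂ ^ 2 - k₁ ^ 2) * ((k₂ ^ 2) ^ 2 + k₂ ^ 2 * k₁ ^ 2 + (k₁ ^ 2) ^ 2 - 1) = 0 := by
    linear_combination hmcube - hmcube1
  have hq : (k₂ ^ 2) ^ 2 + k₂ ^ 2 * k₁ ^ 2 + (k₁ ^ 2) ^ 2 = 1 := by
    rcases mul_eq_zero.mp hfac with h | h
    · linarith
    · linarith
  have hm13 : 1 / 3 < (k₂ ^ 2) ^ 2 := by nlinarith [sq_nonneg (k₁ ^ 2), sq_nonneg k₁, hm1lt]
  have hr0 : (0:ℝ) < Real.sqrt 6 := Real.sqrt_pos.mpr (by norm_num)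
  have hr : Real.sqrt 6 ^ 2 = 6 := Real.sq_sqrt (by norm_num)
  have hμr : 9 * μ < Real.sqrt 6 := by linarith [hμ]
  have hm23 : 2 / 3 < (k₂ ^ 2) ^ 2 := by
    by_contra hcon
    push_neg at hcon
    set r := Real.sqrt 6
    set m := k₂ ^ 2
    have h3m : 3 * m ≤ r := by nlinarith
    have hrm : r * m ≤ 2 := by nlinarith
    have hA : 0 ≤ (r - 3 * m) * (3 * m ^ 2 - 1) :=
      mul_nonneg (by linarith) (by nlinarith)
    have hB : 0 ≤ 3 * m * (2 - r * m) := by nlinarith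
    have hsum : (r - 3 * m) * (3 * m ^ 2 - 1) + 3 * m * (2 - r * m) = 9 * m - 9 * m ^ 3 - r := by
      ring
    linarith [hA, hB, hμr, hmcube]
  have h3μ : 3 * μ < k₂ ^ 2 := by nlinarith [hmcube, hm23, hm0]
  constructor
  · intro k l hk hl hle
    have hF2m : (k₂ ^ 2 + (1 / 3) * l₂ ^ 2) * (3 * k₂ ^ 2) = 3 * (k₂ ^ 2) ^ 2 + 1 := by
      linear_combination (k₂ * l₂ + 1) * h1
    have hid : 9 * k₂ ^ 2 * (k ^ 2 + (1 / 3) * l ^ 2) ^ 2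
        - 3 * (3 * (k₂ ^ 2) ^ 2 + 1) * ((4 / 3) * k ^ 3 * l + (μ / 3) * l ^ 4)
        = (k - k₂ ^ 2 * l) ^ 2 *
          (9 * k₂ ^ 2 * k ^ 2 + (6 * (k₂ ^ 2) ^ 2 - 4) * k * l + (k₂ ^ 2 - 3 * μ) * l ^ 2) := by
      linear_combination (3 * l ^ 2 * (k - k₂ ^ 2 * l) ^ 2 - (3 * (k₂ ^ 2) ^ 2 + 1) * l ^ 4) * hmcube
    have hQ : 0 < 9 * k₂ ^ 2 * k ^ 2 + (6 * (k₂ ^ 2) ^ 2 - 4) * k * l + (k₂ ^ 2 - 3 * μ) * l ^ 2 := by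
      have ha : 0 < 9 * k₂ ^ 2 * k ^ 2 := by positivity
      have hb : 0 ≤ (6 * (k₂ ^ 2) ^ 2 - 4) * (k * l) :=
        mul_nonneg (by nlinarith) (le_of_lt (mul_pos hk hl))
      have hc : 0 ≤ (k₂ ^ 2 - 3 * μ) * l ^ 2 := mul_nonneg (by linarith) (sq_nonneg l)
      nlinarith
    have key : 0 ≤ 9 * k₂ ^ 2 * (k ^ 2 + (1 / 3) * l ^ 2) ^ 2
        - 3 * (3 * (k₂ ^ 2) ^ 2 + 1) * ((4 / 3) * k ^ 3 * l + (μ / 3) * l ^ 4) := by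
      rw [hid]; exact mul_nonneg (sq_nonneg _) (le_of_lt hQ)
    have hg0 : 0 < (4 / 3) * k ^ 3 * l + (μ / 3) * l ^ 4 := by positivity
    have hkey2 : (k₂ ^ 2 + (1 / 3) * l₂ ^ 2) * ((4 / 3) * k ^ 3 * l + (μ / 3) * l ^ 4)
        ≤ (k ^ 2 + (1 / 3) * l ^ 2) ^ 2 := by
      nlinarith [key, hF2m, hm0, mul_pos hg0 hm0]
    have hf0 : 0 < k ^ 2 + (1 / 3) * l ^ 2 := by positivity
    have hF20 : 0 < k₂ ^ 2 + (1 / 3) * l₂ ^ 2 := by positivity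
    nlinarith [hkey2, mul_le_mul_of_nonneg_left hle (le_of_lt hF20), hf0, hF20]
  · rw [lt_div_iff₀ (by positivity)]
    nlinarith [hmcube, hm23, h1, hm0, hμ0, sq_nonneg l₂, mul_pos hk₂ hl₂]
end

section
/- If √6/9 < μ ≤ 2√3/9, then every pair (k, l) of positive reals satisfying k² + (1/3)l² ≤ (4/3)k³l + (μ/3)l⁴ obeys k² + (1/3)l² > 1/(3μ). -/
theorem nehari_lower_bound_large_mu (μ : ℝ) (hμ1 : Real.sqrt 6 / 9 < μ)
    (hμ2 : μ ≤ 2 * Real.sqrt 3 / 9) (k l : ℝ) (hk : 0 < k) (hl : 0 < l)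
    (h : k ^ 2 + (1 / 3) * l ^ 2 ≤ (4 / 3) * k ^ 3 * l + (μ / 3) * l ^ 4) :
    k ^ 2 + (1 / 3) * l ^ 2 > 1 / (3 * μ) := by
  have h6 : (Real.sqrt 6) ^ 2 = 6 := Real.sq_sqrt (by norm_num)
  have h6pos : 0 < Real.sqrt 6 := Real.sqrt_pos.mpr (by norm_num)
  have hμ0 : 0 < μ := lt_trans (by positivity) hμ1
  have amgm : 2 * Real.sqrt 6 * (k * l) ≤ 3 * k ^ 2 + 2 * l ^ 2 := by
    nlinarith [sq_nonneg (3 * k - Real.sqrt 6 * l)]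
  have key : (4 / 3) * k ^ 3 * l + (μ / 3) * l ^ 4 <
      3 * μ * (k ^ 2 + (1 / 3) * l ^ 2) ^ 2 := by
    nlinarith [mul_pos hk hl, sq_nonneg k, mul_pos (mul_pos hk hk) (mul_pos hk hl),
      mul_le_mul_of_nonneg_left amgm (le_of_lt (mul_pos hμ0 (by positivity : (0:ℝ) < k ^ 2))),
      mul_lt_mul_of_pos_right hμ1 (mul_pos (mul_pos hk hk) (mul_pos hk hl))]
  have hS : 0 < k ^ 2 + (1 / 3) * l ^ 2 := by positivity
  have hlt : k ^ 2 + (1 / 3) * l ^ 2 < 3 * μ * (k ^ 2 + (1 / 3) * l ^ 2) ^ 2 :=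
    lt_of_le_of_lt h key
  rw [gt_iff_lt, div_lt_iff₀ (by positivity)]
  nlinarith [hlt, hS]
end

section
/- For every s > 0 and 0 < μ < √6/9, define t(s) = √((3s² + 1)μ/(4s³ + μ)). Then at s = 2/(9μ) one has (3s² + 1)²μ/(4s³ + μ) < 1, i.e. the quantity ((3s²+1)²μ)/(4s³+μ) evaluated at s = 2/(9μ) is strictly less than 1. -/
theorem key_projection_inequality (μ : ℝ) (hμ0 : 0 < μ) (hμ : μ < Real.sqrt 6 / 9) :
    let s : ℝ := 2 / (9 * μ)
    (3 * s ^ 2 + 1) ^ 2 * μ / (4 * s ^ 3 + μ) < 1 := by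
  intro s
  have h6 : Real.sqrt 6 ^ 2 = 6 := Real.sq_sqrt (by norm_num)
  have hμ2 : μ ^ 2 < 2 / 27 := by nlinarith [Real.sqrt_nonneg 6]
  have hs : s = 2 / (9 * μ) := rfl
  have hden : 0 < 4 * s ^ 3 + μ := by rw [hs]; positivity
  rw [div_lt_one hden, hs]
  have hμ' : μ ≠ 0 := ne_of_gt hμ0
  have key : 4 * (2 / (9 * μ)) ^ 3 + μ - (3 * (2 / (9 * μ)) ^ 2 + 1) ^ 2 * μ
      = 1944 * (2 / 27 - μ ^ 2) / (6561 * μ ^ 3) := by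
    field_simp
    ring
  have hpos : 0 < 1944 * (2 / 27 - μ ^ 2) / (6561 * μ ^ 3) := by
    apply div_pos (by linarith) (by positivity)
  linarith
end
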